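/- arXiv:1711.01323 — 5 statements merged into one kernel-verified Lean document; each statement's English description precedes it below -/
import Mathlib

section
/- Fix a real τ > 1 and q ∈ {1, 2}. Let β be a random variable uniformly distributed on [0, 1), and set a = τ^β (so that ln a is uniform on [0, ln τ)). For a real number d ≥ 1, define d'(a) to be the smallest element of {a τ^ℓ : ℓ ∈ ℤ, ℓ ≥ 0} that is ≥ d. Then d'(a) ≥ d holds always, and E_β[(d'(a))^q] = ((τ^q − 1)/(q ln τ)) · d^q. -/
open MeasureTheory

/-- `dRound τ a d` is the smallest element of `{a τ^ℓ : ℓ ∈ ℤ, ℓ ≥ 0}` that is `≥ d`. -/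
noncomputable def dRound (τ a d : ℝ) : ℝ :=
  sInf {x : ℝ | (∃ ℓ : ℕ, x = a * τ ^ ℓ) ∧ d ≤ x}

lemma dRound_eq (τ d : ℝ) (hτ : 1 < τ) (hd0 : 0 < d) (β : ℝ) :
    dRound τ (τ ^ β) d = τ ^ (β + (⌈Real.logb τ d - β⌉₊ : ℝ)) := by
  have hτ0 : (0:ℝ) < τ := lt_trans one_pos hτ
  have hτ1 : τ ≠ 1 := ne_of_gt hτ
  set L := Real.logb τ d with hL
  have hdL : τ ^ L = d := Real.rpow_logb hτ0 hτ1 hd0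
  have hprod : ∀ ℓ : ℕ, τ ^ β * τ ^ ℓ = τ ^ (β + (ℓ:ℝ)) := by
    intro ℓ
    rw [← Real.rpow_natCast τ ℓ, ← Real.rpow_add hτ0]
  have hmem : ∀ ℓ : ℕ, (d ≤ τ ^ β * τ ^ ℓ ↔ L - β ≤ (ℓ:ℝ)) := by
    intro ℓ
    rw [hprod, ← hdL, Real.rpow_le_rpow_left_iff hτ]
    exact sub_le_iff_le_add'.symm
  have hmem' : d ≤ τ ^ β * τ ^ (⌈L - β⌉₊) := (hmem _).mpr (Nat.le_ceil _)
  have hmemS : (τ ^ β * τ ^ (⌈L - β⌉₊)) ∈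
      {x : ℝ | (∃ ℓ : ℕ, x = τ ^ β * τ ^ ℓ) ∧ d ≤ x} := ⟨⟨_, rfl⟩, hmem'⟩
  unfold dRound
  rw [← hprod]
  apply le_antisymm
  · apply csInf_le _ hmemS
    refine ⟨0, fun x hx => ?_⟩
    obtain ⟨⟨ℓ, rfl⟩, _⟩ := hx
    positivity
  · apply le_csInf ⟨_, hmemS⟩
    rintro x ⟨⟨ℓ, rfl⟩, hx⟩
    have hceil : ⌈L - β⌉₊ ≤ ℓ := Nat.ceil_le.mpr ((hmem ℓ).mp hx)
    rw [hprod ℓ, hprod ⌈L - β⌉₊]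
    exact (Real.rpow_le_rpow_left_iff hτ).mpr (by exact_mod_cast (add_le_add_iff_left β).mpr (Nat.cast_le.mpr hceil))

/-- Random discretization of distances (Lemma 4.2): with `β` uniform on `[0,1)` and
`a = τ^β`, every `d ≥ 1` satisfies `d'(a) ≥ d`, and
`E_β[(d'(a))^q] = ((τ^q − 1)/(q ln τ)) · d^q`. -/
theorem stmt7 (τ : ℝ) (hτ : 1 < τ) (q : ℕ) (hq : q = 1 ∨ q = 2)
    (d : ℝ) (hd : 1 ≤ d) :
    (∀ β ∈ Set.Ico (0 : ℝ) 1, d ≤ dRound τ (τ ^ β) d) ∧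
    (∫ β in Set.Ico (0 : ℝ) 1, (dRound τ (τ ^ β) d) ^ q) =
      ((τ ^ q - 1) / (q * Real.log τ)) * d ^ q := by
  have hτ0 : (0:ℝ) < τ := lt_trans one_pos hτ
  have hτ1 : τ ≠ 1 := ne_of_gt hτ
  have hd0 : (0:ℝ) < d := lt_of_lt_of_le one_pos hd
  have hlog : 0 < Real.log τ := Real.log_pos hτ
  have hq1 : 1 ≤ q := by rcases hq with h | h <;> omega
  have hqR : (0:ℝ) < (q:ℝ) := by exact_mod_cast Nat.lt_of_lt_of_le Nat.zero_lt_one hq1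
  set L := Real.logb τ d with hL
  have hdL : τ ^ L = d := Real.rpow_logb hτ0 hτ1 hd0
  have hL0 : 0 ≤ L := Real.logb_nonneg hτ hd
  set c := (q:ℝ) * Real.log τ with hc
  have hc0 : 0 < c := mul_pos hqR hlog
  constructor
  · intro β _
    rw [dRound_eq τ d hτ hd0 β, ← hL, ← hdL]
    apply Real.rpow_le_rpow_left_iff hτ |>.mpr
    have := Nat.le_ceil (L - β)
    linarith
  · -- integral part
    set n : ℕ := ⌊L⌋₊ with hn
    set θ : ℝ := L - n with hθ
    have hθ0 : 0 ≤ θ := sub_nonneg.mpr (Nat.floor_le hL0)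
    have hθ1 : θ < 1 := by
      have h := Nat.lt_floor_add_one L
      rw [hθ, hn]
      push_cast
      linarith
    -- conversion to exp form
    have hconv : ∀ x y : ℝ, τ ^ ((q:ℝ) * (x + y)) = Real.exp (c * x) * τ ^ ((q:ℝ) * y) := by
      intro x y
      rw [mul_add, Real.rpow_add hτ0]
      congr 1
      rw [Real.rpow_def_of_pos hτ0, hc]
      ring_nf
    set G₁ : ℝ → ℝ := fun β => Real.exp (c * β) * τ ^ ((q:ℝ) * ((n:ℝ) + 1)) with hG₁
    set G₂ : ℝ → ℝ := fun β => Real.exp (c * β) * τ ^ ((q:ℝ) * (n:ℝ)) with hG₂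
    set G : ℝ → ℝ := fun β => if β < θ then G₁ β else G₂ β with hG
    -- ceil computations
    have claimA : ∀ β : ℝ, 0 ≤ β → β < θ → ⌈L - β⌉₊ = n + 1 := by
      intro β hβ0 hβθ
      rw [Nat.ceil_eq_iff (Nat.succ_ne_zero n)]
      have h1 : (n:ℝ) < L := by rw [hθ] at hβθ; linarith
      have h2 : L < (n:ℝ) + 1 := by exact_mod_cast Nat.lt_floor_add_one L
      constructor
      · push_cast; linarith
      · push_cast; linarith
    have claimB : ∀ β : ℝ, θ ≤ β → β < 1 → ⌈L - β⌉₊ = n := by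
      intro β hβθ hβ1
      rcases Nat.eq_zero_or_pos n with h0 | hpos
      · rw [h0]
        rw [Nat.ceil_eq_zero]
        rw [hθ, h0] at hβθ; push_cast at hβθ; linarith
      · rw [Nat.ceil_eq_iff (Nat.pos_iff_ne_zero.mp hpos)]
        constructor
        · have h1 : θ - β > -1 := by linarith
          rw [hθ] at h1
          rw [Nat.cast_sub hpos]
          push_cast
          linarith
        · rw [hθ] at hβθ; linarith
    -- pointwise equality on Ico 0 1
    have hFG : Set.EqOn (fun β => (dRound τ (τ ^ β) d) ^ q) G (Set.Ico (0:ℝ) 1) := by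
      intro β hβ
      obtain ⟨hβ0, hβ1⟩ := hβ
      have hpow : (dRound τ (τ ^ β) d) ^ q = τ ^ ((q:ℝ) * (β + (⌈L - β⌉₊ : ℝ))) := by
        rw [dRound_eq τ d hτ hd0 β, ← Real.rpow_natCast (τ ^ (β + (⌈L - β⌉₊:ℝ))) q,
          ← Real.rpow_mul (le_of_lt hτ0), mul_comm]
      simp only [hG]
      by_cases hβθ : β < θ
      · rw [hpow, claimA β hβ0 hβθ, if_pos hβθ, hG₁]
        push_cast
        exact hconv β ((n:ℝ) + 1)
      · rw [hpow, claimB β (not_lt.mp hβθ) hβ1, if_neg hβθ, hG₂]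
        exact hconv β (n:ℝ)
    rw [setIntegral_congr_fun measurableSet_Ico hFG]
    -- split the integral
    have hcont₁ : Continuous G₁ := by
      exact (Real.continuous_exp.comp (continuous_const.mul continuous_id)).mul continuous_const
    have hcont₂ : Continuous G₂ := by
      exact (Real.continuous_exp.comp (continuous_const.mul continuous_id)).mul continuous_const
    have hdisj : Disjoint (Set.Ico (0:ℝ) θ) (Set.Ico θ 1) := by
      apply Set.disjoint_left.mpr
      rintro x ⟨_, hx2⟩ ⟨hx3, _⟩
      exact absurd hx3 (not_le.mpr hx2)
    have hEq1 : Set.EqOn G G₁ (Set.Ico (0:ℝ) θ) := by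
      intro x hx; simp only [hG, if_pos hx.2]
    have hEq2 : Set.EqOn G G₂ (Set.Ico θ 1) := by
      intro x hx; simp only [hG, if_neg (not_lt.mpr hx.1)]
    have hint1 : IntegrableOn G (Set.Ico (0:ℝ) θ) := by
      exact ((hcont₁.integrableOn_Icc).mono_set Set.Ico_subset_Icc_self).congr_fun hEq1.symm measurableSet_Ico
    have hint2 : IntegrableOn G (Set.Ico θ 1) := by
      exact ((hcont₂.integrableOn_Icc).mono_set Set.Ico_subset_Icc_self).congr_fun hEq2.symm measurableSet_Ico
    rw [← Set.Ico_union_Ico_eq_Ico hθ0 (le_of_lt hθ1),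
      setIntegral_union hdisj measurableSet_Ico hint1 hint2,
      setIntegral_congr_fun measurableSet_Ico hEq1,
      setIntegral_congr_fun measurableSet_Ico hEq2]
    -- compute each
    have hexp : ∀ a b : ℝ, a ≤ b → ∫ x in Set.Ico a b, Real.exp (c * x) =
        (Real.exp (c * b) - Real.exp (c * a)) / c := by
      intro a b hab
      rw [setIntegral_congr_set Ico_ae_eq_Ioc, ← intervalIntegral.integral_of_le hab,
        intervalIntegral.integral_comp_mul_left (fun y => Real.exp y) (ne_of_gt hc0),
        integral_exp, smul_eq_mul]
      ring
    have hexpc : ∀ x : ℝ, Real.exp (c * x) = τ ^ ((q:ℝ) * x) := by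
      intro x
      rw [Real.rpow_def_of_pos hτ0, hc]
      ring_nf
    have hLθ : L = θ + (n:ℝ) := by rw [hθ]; ring
    simp only [hG₁, hG₂, integral_mul_const]
    rw [hexp 0 θ hθ0, hexp θ 1 (le_of_lt hθ1)]
    rw [hexpc θ, hexpc 0, hexpc 1, mul_zero, Real.rpow_zero, mul_one]
    rw [← hdL, ← Real.rpow_natCast (τ ^ L) q, ← Real.rpow_mul (le_of_lt hτ0), hLθ]
    rw [← Real.rpow_natCast τ q]
    have e1 : τ ^ ((q:ℝ) * ((n:ℝ) + 1)) = τ ^ ((q:ℝ) * (n:ℝ)) * τ ^ ((q:ℝ)) := by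
      rw [← Real.rpow_add hτ0]; ring_nf
    have e2 : τ ^ ((θ + (n:ℝ)) * (q:ℝ)) = τ ^ ((q:ℝ) * θ) * τ ^ ((q:ℝ) * (n:ℝ)) := by
      rw [← Real.rpow_add hτ0]; ring_nf
    rw [e1, e2]
    field_simp
    ring
end

section
/- Let F be a finite set, k and m integers, and let C*, C_full, C_part be finite disjoint index sets equipped with subsets F_j ⊆ F for each j ∈ C* ∪ C_part and B_j ⊆ F for each j ∈ C_full, such that the sets {F_j : j ∈ C*} are pairwise disjoint. Let P ⊆ ℝ^F be the polytope of all y ∈ [0,1]^F satisfying: Σ_{i∈F} y_i ≤ k; Σ_{i∈F_j} y_i = 1 for every j ∈ C*; Σ_{i∈B_j} y_i ≤ 1 for every j ∈ C_full; Σ_{i∈F_j} y_i ≤ 1 for every j ∈ C_part; and |C_full| + Σ_{j∈C_part} Σ_{i∈F_j} y_i ≥ m. If y* is an extreme point of P such that Σ_{i∈B_j} y*_i < 1 for every j ∈ C_full and Σ_{i∈F_j} y*_i < 1 for every j ∈ C_part, then y* has at most two coordinates lying strictly between 0 and 1. -/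
open Finset

lemma sum_binary' {F : Type*} [DecidableEq F] (S : Finset F) (y : F → ℝ)
    (h : ∀ i ∈ S, y i = 0 ∨ y i = 1) : ∃ n : ℕ, ∑ i ∈ S, y i = n := by
  induction S using Finset.induction_on with
  | empty => exact ⟨0, by simp⟩
  | insert a s hx ih =>
    obtain ⟨n, hn⟩ := ih (fun i hi => h i (mem_insert_of_mem hi))
    rcases h _ (mem_insert_self _ _) with h0 | h1
    · exact ⟨n, by rw [Finset.sum_insert hx, h0, hn]; ring⟩
    · exact ⟨n+1, by rw [Finset.sum_insert hx, h1, hn]; push_cast; ring⟩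



lemma exists_nonzero_kernel {F : Type*} [Fintype F] [DecidableEq F]
    (s : Finset F) (κ : Type*) [Fintype κ]
    (φ : κ → ((F → ℝ) →ₗ[ℝ] ℝ)) (h : Fintype.card κ < s.card) :
    ∃ d : F → ℝ, d ≠ 0 ∧ (∀ i, i ∉ s → d i = 0) ∧ ∀ a, φ a d = 0 := by
  classical
  let e : ({ x // x ∈ s } → ℝ) →ₗ[ℝ] (F → ℝ) :=
    { toFun := fun v i => if h : i ∈ s then v ⟨i, h⟩ else 0
      map_add' := by intro v w; funext i; by_cases hi : i ∈ s <;> simp [hi]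
      map_smul' := by intro c v; funext i; by_cases hi : i ∈ s <;> simp [hi] }
  let Φ : ({ x // x ∈ s } → ℝ) →ₗ[ℝ] (κ → ℝ) := LinearMap.pi (fun a => (φ a).comp e)
  have hni : ¬ Function.Injective Φ := by
    intro hinj
    have := LinearMap.finrank_le_finrank_of_injective hinj
    simp [Module.finrank_pi, Fintype.card_coe] at this
    omega
  rw [Function.not_injective_iff] at hni
  obtain ⟨x, y, hxy, hne⟩ := hni
  refine ⟨e (x - y), ?_, ?_, ?_⟩
  · intro h0
    apply hne
    have : ∀ p : {x // x ∈ s}, (e (x - y)) p.1 = 0 := fun p => by rw [h0]; rfl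
    funext p
    have hp := this p
    simp [e, p.2] at hp
    linarith [hp]
  · intro i hi; simp [e, hi]
  · intro a
    have : Φ (x - y) = 0 := by
      rw [map_sub, hxy, sub_self]
    have := congrFun this a
    simpa [Φ] using this


noncomputable def sumOn {F : Type*} [Fintype F] [DecidableEq F] (S : Finset F) : (F → ℝ) →ₗ[ℝ] ℝ :=
  ∑ i ∈ S, LinearMap.proj i

@[simp] lemma sumOn_apply {F : Type*} [Fintype F] [DecidableEq F] (S : Finset F) (d : F → ℝ) :
    sumOn S d = ∑ i ∈ S, d i := by
  simp [sumOn]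

lemma exists_eps {α : Type*} (S : Finset α) (f : α → ℝ) (h : ∀ j ∈ S, 0 < f j) :
    ∃ ε : ℝ, 0 < ε ∧ ∀ j ∈ S, ε ≤ f j := by
  rcases S.eq_empty_or_nonempty with rfl | hS
  · exact ⟨1, one_pos, by simp⟩
  · exact ⟨S.inf' hS f, (Finset.lt_inf'_iff hS).2 h, fun j hj => Finset.inf'_le f hj⟩

lemma small_mul' {A s c w : ℝ} (hA : 0 ≤ A) (hs : 0 ≤ s) (hc : |c| ≤ s / (A + 1)) (hw : |w| ≤ A) :
    |c * w| ≤ s := by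
  have h1 : (0:ℝ) < A + 1 := by linarith
  have h2 : |c| * |w| ≤ (s / (A + 1)) * A :=
    mul_le_mul hc hw (abs_nonneg _) (div_nonneg hs h1.le)
  have h3 : (s / (A + 1)) * (A + 1) = s := div_mul_cancel₀ s h1.ne'
  rw [abs_mul]
  nlinarith [abs_nonneg c, abs_nonneg w]

lemma perturb_contradiction {F ι : Type*} [Fintype F] [DecidableEq F]
    (k m : ℕ) (Cstar Cfull Cpart : Finset ι)
    (Fj Bj : ι → Finset F)
    (P : Set (F → ℝ))
    (hP : P = {y : F → ℝ |
        (∀ i, 0 ≤ y i ∧ y i ≤ 1) ∧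
        (∑ i, y i ≤ (k : ℝ)) ∧
        (∀ j ∈ Cstar, ∑ i ∈ Fj j, y i = 1) ∧
        (∀ j ∈ Cfull, ∑ i ∈ Bj j, y i ≤ 1) ∧
        (∀ j ∈ Cpart, ∑ i ∈ Fj j, y i ≤ 1) ∧
        ((m : ℝ) ≤ (Cfull.card : ℝ) + ∑ j ∈ Cpart, ∑ i ∈ Fj j, y i)})
    (ystar : F → ℝ) (hext : ystar ∈ Set.extremePoints ℝ P)
    (hBlt : ∀ j ∈ Cfull, ∑ i ∈ Bj j, ystar i < 1)
    (hFlt : ∀ j ∈ Cpart, ∑ i ∈ Fj j, ystar i < 1)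
    (d : F → ℝ) (Hne : d ≠ 0)
    (Hsupp : ∀ i, d i ≠ 0 → 0 < ystar i ∧ ystar i < 1)
    (Hcore : ∀ j ∈ Cstar, ∑ i ∈ Fj j, d i = 0)
    (Hcov : ∑ j ∈ Cpart, ∑ i ∈ Fj j, d i = 0)
    (Hcard : (∑ i, d i = 0) ∨ (∑ i, ystar i < k)) : False := by
  classical
  have hyP := hext.1
  rw [hP] at hyP
  obtain ⟨hbox, hcle, hcore, hBle, hFle, hcovy⟩ := hyP
  set A : ℝ := ∑ i, |d i| with hAdef
  have hA : 0 ≤ A := Finset.sum_nonneg (fun i _ => abs_nonneg _)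
  have habs : ∀ S : Finset F, |∑ i ∈ S, d i| ≤ A := fun S =>
    (Finset.abs_sum_le_sum_abs _ _).trans
      (Finset.sum_le_sum_of_subset_of_nonneg (Finset.subset_univ S) (fun i _ _ => abs_nonneg _))
  have habs1 : ∀ i, |d i| ≤ A := fun i =>
    Finset.single_le_sum (f := fun i => |d i|) (fun i _ => abs_nonneg _) (Finset.mem_univ i)
  obtain ⟨ε1, hε1, hε1le⟩ := exists_eps (Finset.univ.filter (fun i => d i ≠ 0))
    (fun i => min (ystar i) (1 - ystar i))
    (fun i hi => by
      obtain ⟨h1, h2⟩ := Hsupp i (Finset.mem_filter.1 hi).2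
      exact lt_min h1 (by linarith))
  obtain ⟨ε2, hε2, hε2le⟩ := exists_eps Cfull (fun j => 1 - ∑ i ∈ Bj j, ystar i)
    (fun j hj => by have := hBlt j hj; show (0:ℝ) < 1 - ∑ i ∈ Bj j, ystar i; linarith)
  obtain ⟨ε3, hε3, hε3le⟩ := exists_eps Cpart (fun j => 1 - ∑ i ∈ Fj j, ystar i)
    (fun j hj => by have := hFlt j hj; show (0:ℝ) < 1 - ∑ i ∈ Fj j, ystar i; linarith)
  obtain ⟨ε4, hε4, hcard'⟩ : ∃ ε4, 0 < ε4 ∧ ∀ c : ℝ, |c| ≤ ε4 →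
      ∑ i, (ystar i + c * d i) ≤ (k : ℝ) := by
    rcases Hcard with h0 | hlt
    · exact ⟨1, one_pos, fun c _ => by
        rw [Finset.sum_add_distrib, ← Finset.mul_sum, h0, mul_zero, add_zero]; exact hcle⟩
    · refine ⟨((k:ℝ) - ∑ i, ystar i)/(A+1), div_pos (by linarith) (by linarith), fun c hc => ?_⟩
      have h2 := small_mul' hA (by linarith) hc (habs Finset.univ)
      have h3 : c * ∑ i, d i ≤ (k : ℝ) - ∑ i, ystar i := le_trans (le_abs_self _) h2
      rw [Finset.sum_add_distrib, ← Finset.mul_sum]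
      linarith
  set ε : ℝ := min (ε1/(A+1)) (min (ε2/(A+1)) (min (ε3/(A+1)) ε4)) with hεdef
  have hεpos : 0 < ε := by
    apply lt_min (by positivity)
    exact lt_min (by positivity) (lt_min (by positivity) hε4)
  have hcε1 : ε ≤ ε1/(A+1) := min_le_left _ _
  have hcε2 : ε ≤ ε2/(A+1) := le_trans (min_le_right _ _) (min_le_left _ _)
  have hcε3 : ε ≤ ε3/(A+1) := le_trans (min_le_right _ _) (le_trans (min_le_right _ _) (min_le_left _ _))
  have hcε4 : ε ≤ ε4 := le_trans (min_le_right _ _) (le_trans (min_le_right _ _) (min_le_right _ _))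
  have hmem : ∀ c : ℝ, |c| ≤ ε → (fun i => ystar i + c * d i) ∈ P := by
    intro c hc
    rw [hP]
    refine ⟨?_, ?_, ?_, ?_, ?_, ?_⟩
    · intro i
      by_cases hdi : d i = 0
      · simpa [hdi] using hbox i
      · have hmemi : i ∈ Finset.univ.filter (fun i => d i ≠ 0) := by simp [hdi]
        have h1 := hε1le i hmemi
        have h2 : |c * d i| ≤ ε1 := small_mul' hA hε1.le (le_trans hc hcε1) (habs1 i)
        obtain ⟨hl, hr⟩ := Hsupp i hdi
        have hmin1 : ε1 ≤ ystar i := le_trans h1 (min_le_left _ _)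
        have hmin2 : ε1 ≤ 1 - ystar i := le_trans h1 (min_le_right _ _)
        have hb1 := neg_abs_le (c * d i)
        have hb2 := le_abs_self (c * d i)
        constructor
        · show (0:ℝ) ≤ ystar i + c * d i; linarith
        · show ystar i + c * d i ≤ 1; linarith
    · exact hcard' c (le_trans hc hcε4)
    · intro j hj
      rw [Finset.sum_add_distrib, ← Finset.mul_sum, Hcore j hj, mul_zero, add_zero]
      exact hcore j hj
    · intro j hj
      have h2 : |c * ∑ i ∈ Bj j, d i| ≤ ε2 :=
        small_mul' hA hε2.le (le_trans hc hcε2) (habs _)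
      have h3 := le_trans (le_abs_self _) h2
      have h4 := hε2le j hj
      rw [Finset.sum_add_distrib, ← Finset.mul_sum]
      linarith
    · intro j hj
      have h2 : |c * ∑ i ∈ Fj j, d i| ≤ ε3 :=
        small_mul' hA hε3.le (le_trans hc hcε3) (habs _)
      have h3 := le_trans (le_abs_self _) h2
      have h4 := hε3le j hj
      rw [Finset.sum_add_distrib, ← Finset.mul_sum]
      linarith
    · have heq : ∑ j ∈ Cpart, ∑ i ∈ Fj j, (ystar i + c * d i)
          = (∑ j ∈ Cpart, ∑ i ∈ Fj j, ystar i) + c * ∑ j ∈ Cpart, ∑ i ∈ Fj j, d i := by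
        rw [Finset.mul_sum, ← Finset.sum_add_distrib]
        exact Finset.sum_congr rfl (fun j _ => by
          rw [Finset.sum_add_distrib, ← Finset.mul_sum])
      rw [heq, Hcov, mul_zero, add_zero]
      exact hcovy
  have hx1 := hmem ε (by rw [abs_of_pos hεpos])
  have hx2 := hmem (-ε) (by rw [abs_neg, abs_of_pos hεpos])
  have hseg : ystar ∈ openSegment ℝ (fun i => ystar i + ε * d i) (fun i => ystar i + (-ε) * d i) := by
    refine ⟨1/2, 1/2, by norm_num, by norm_num, by norm_num, ?_⟩
    funext i
    simp only [Pi.add_apply, Pi.smul_apply, smul_eq_mul]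
    ring
  have heq1 := hext.2 hx1 hx2 hseg
  obtain ⟨i0, hi0⟩ := Function.ne_iff.1 Hne
  have := congrFun heq1 i0
  have : ε * d i0 = 0 := by linarith [this]
  rcases mul_eq_zero.1 this with h | h
  · exact absurd h (ne_of_gt hεpos)
  · exact hi0 (by simpa using h)


/-- Almost-integrality of extreme points of the auxiliary iterative-rounding LP
(Lemma 4.3): if none of the non-core constraints `y(B_j) ≤ 1` (full clients) and
`y(F_j) ≤ 1` (partial clients) are tight at an extreme point `y*` of the polytope,
then `y*` has at most two fractional coordinates. -/
theorem stmt8 {F ι : Type*} [Fintype F] [DecidableEq F]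
    (k m : ℕ)
    (Cstar Cfull Cpart : Finset ι)
    (hd1 : Disjoint Cstar Cfull) (hd2 : Disjoint Cstar Cpart) (hd3 : Disjoint Cfull Cpart)
    (Fj : ι → Finset F) (Bj : ι → Finset F)
    (hFdisj : ∀ j ∈ Cstar, ∀ j' ∈ Cstar, j ≠ j' → Disjoint (Fj j) (Fj j'))
    (P : Set (F → ℝ))
    (hP : P = {y : F → ℝ |
        (∀ i, 0 ≤ y i ∧ y i ≤ 1) ∧
        (∑ i, y i ≤ (k : ℝ)) ∧
        (∀ j ∈ Cstar, ∑ i ∈ Fj j, y i = 1) ∧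
        (∀ j ∈ Cfull, ∑ i ∈ Bj j, y i ≤ 1) ∧
        (∀ j ∈ Cpart, ∑ i ∈ Fj j, y i ≤ 1) ∧
        ((m : ℝ) ≤ (Cfull.card : ℝ) + ∑ j ∈ Cpart, ∑ i ∈ Fj j, y i)})
    (ystar : F → ℝ) (hext : ystar ∈ Set.extremePoints ℝ P)
    (hBlt : ∀ j ∈ Cfull, ∑ i ∈ Bj j, ystar i < 1)
    (hFlt : ∀ j ∈ Cpart, ∑ i ∈ Fj j, ystar i < 1) :
    (Finset.univ.filter fun i => 0 < ystar i ∧ ystar i < 1).card ≤ 2 := by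
  classical
  by_contra hcard
  push_neg at hcard
  have hf3 : 3 ≤ (Finset.univ.filter fun i => 0 < ystar i ∧ ystar i < 1).card := hcard
  clear hcard
  set Frac : Finset F := Finset.univ.filter (fun i => 0 < ystar i ∧ ystar i < 1) with hFracDef
  have hmemFrac : ∀ i, i ∈ Frac ↔ (0 < ystar i ∧ ystar i < 1) := by
    intro i; simp [hFracDef]
  -- basic facts about ystar from membership in P
  have hyP := hext.1
  rw [hP] at hyP
  obtain ⟨hbox, hcle, hcore, hBle, hFle, hcovy⟩ := hyP
  have hbin : ∀ i, i ∉ Frac → ystar i = 0 ∨ ystar i = 1 := by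
    intro i hi
    rw [hmemFrac] at hi
    push_neg at hi
    rcases lt_or_ge 0 (ystar i) with h | h
    · right; exact le_antisymm (hbox i).2 (hi h)
    · left; exact le_antisymm h (hbox i).1
  set T : Finset ι := Cstar.filter (fun j => (Fj j ∩ Frac).Nonempty) with hTdef
  have hTsub : T ⊆ Cstar := Finset.filter_subset _ _
  have hTmem : ∀ j, j ∈ T ↔ j ∈ Cstar ∧ (Fj j ∩ Frac).Nonempty := by
    intro j; simp [hTdef]
  -- each core set meeting Frac contains at least two fractional coordinates
  have ht2 : ∀ j ∈ T, 2 ≤ (Fj j ∩ Frac).card := by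
    intro j hj
    obtain ⟨hjC, hne⟩ := (hTmem j).1 hj
    by_contra hlt
    push_neg at hlt
    interval_cases h : (Fj j ∩ Frac).card
    · exact absurd (Finset.card_eq_zero.1 h ▸ hne) (by simp)
    · obtain ⟨i0, hi0⟩ := Finset.card_eq_one.1 h
      obtain ⟨n, hn⟩ := sum_binary' (Fj j \ Frac) ystar
        (fun i hi => hbin i (Finset.mem_sdiff.1 hi).2)
      have hsplit := Finset.sum_inter_add_sum_sdiff (Fj j) Frac ystar
      rw [hi0] at hsplit
      simp only [Finset.sum_singleton] at hsplit
      have h1 : ystar i0 + (n : ℝ) = 1 := by rw [hn] at hsplit; rw [hsplit]; exact hcore j hjC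
      have hi0F : i0 ∈ Frac := by
        have : i0 ∈ Fj j ∩ Frac := hi0 ▸ Finset.mem_singleton_self i0
        exact (Finset.mem_inter.1 this).2
      obtain ⟨ha, hb⟩ := (hmemFrac i0).1 hi0F
      have hn0 : (n : ℝ) < 1 := by linarith
      have hn1 : (0 : ℝ) < (n : ℝ) + 1 := by linarith
      have : n = 0 := by exact_mod_cast Nat.lt_one_iff.1 (by exact_mod_cast hn0)
      rw [this] at h1
      simp at h1
      linarith
  set InCore : Finset F := Cstar.biUnion (fun j => Fj j ∩ Frac) with hICdef
  have hpd : (↑Cstar : Set ι).PairwiseDisjoint (fun j => Fj j ∩ Frac) := by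
    intro x hx y hy hxy
    exact (hFdisj x hx y hy hxy).mono Finset.inter_subset_left Finset.inter_subset_left
  have hICcard : InCore.card = ∑ j ∈ Cstar, (Fj j ∩ Frac).card := Finset.card_biUnion hpd
  have hsumT : ∑ j ∈ T, (Fj j ∩ Frac).card = ∑ j ∈ Cstar, (Fj j ∩ Frac).card := by
    apply Finset.sum_filter_of_ne
    intro j hj hne
    exact Finset.card_ne_zero.1 hne
  have h2t : 2 * T.card ≤ InCore.card := by
    rw [hICcard, ← hsumT]
    calc 2 * T.card = T.card * 2 := by ring
    _ ≤ ∑ j ∈ T, (Fj j ∩ Frac).card := Finset.card_nsmul_le_sum T _ 2 ht2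
  have hICsub : InCore ⊆ Frac := by
    intro i hi
    obtain ⟨j, hj, hij⟩ := Finset.mem_biUnion.1 hi
    exact (Finset.mem_inter.1 hij).2
  set Out : Finset F := Frac \ InCore with hOutdef
  have hcards : Out.card + InCore.card = Frac.card := Finset.card_sdiff_add_card_eq_card hICsub
  -- helpers for upgrading properties of a direction d
  have hsupp' : ∀ d : F → ℝ, (∀ i, i ∉ Frac → d i = 0) →
      ∀ i, d i ≠ 0 → 0 < ystar i ∧ ystar i < 1 := by
    intro d hz i hi
    by_contra hni
    exact hi (hz i (fun hmem => hni ((hmemFrac i).1 hmem)))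
  have hupg : ∀ d : F → ℝ, (∀ i, i ∉ Frac → d i = 0) → (∀ j ∈ T, ∑ i ∈ Fj j, d i = 0) →
      ∀ j ∈ Cstar, ∑ i ∈ Fj j, d i = 0 := by
    intro d hz hT j hj
    by_cases hjT : j ∈ T
    · exact hT j hjT
    · apply Finset.sum_eq_zero
      intro i hi
      by_contra hdi
      have hiF : i ∈ Frac := by
        by_contra hniF
        exact hdi (hz i hniF)
      exact hjT ((hTmem j).2 ⟨hj, ⟨i, Finset.mem_inter.2 ⟨hi, hiF⟩⟩⟩)
  -- existence of a good direction
  have getd : ∀ r : ℕ, 1 ≤ r → T.card + r < Frac.card →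
      ∃ d : F → ℝ, d ≠ 0 ∧ (∀ i, i ∉ Frac → d i = 0) ∧
        (∀ j ∈ T, ∑ i ∈ Fj j, d i = 0) ∧
        (∑ j ∈ Cpart, ∑ i ∈ Fj j, d i = 0) ∧
        (r = 2 → ∑ i, d i = 0) := by
    intro r hr1 hlt
    obtain ⟨d, hne, hz, hall⟩ := exists_nonzero_kernel Frac ({x // x ∈ T} ⊕ Fin r)
      (Sum.elim (fun j => sumOn (Fj j.1))
        (fun q => if q.1 = 0 then ∑ j ∈ Cpart, sumOn (Fj j) else sumOn Finset.univ))
      (by simp only [Fintype.card_sum, Fintype.card_coe, Fintype.card_fin]; omega)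
    refine ⟨d, hne, hz, ?_, ?_, ?_⟩
    · intro j hj
      have := hall (Sum.inl ⟨j, hj⟩)
      simpa using this
    · have := hall (Sum.inr ⟨0, by omega⟩)
      simpa using this
    · intro hr2
      subst hr2
      have := hall (Sum.inr ⟨1, by omega⟩)
      simpa using this
  by_cases hOut0 : Out.card = 0
  -- Case: all fractional coordinates lie in core sets
  · have hFsub : Frac ⊆ InCore := by
      intro i hi
      by_contra hni
      have : i ∈ Out := Finset.mem_sdiff.2 ⟨hi, hni⟩
      rw [Finset.card_eq_zero.1 hOut0] at this
      simp at this
    obtain ⟨d, hne, hz, hT0, hcovd, _⟩ := getd 1 le_rfl (by omega)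
    have hcoreAll := hupg d hz hT0
    have hsum0 : ∑ i, d i = 0 := by
      have h1 : ∑ i ∈ InCore, d i = ∑ i, d i := by
        apply Finset.sum_subset (Finset.subset_univ _)
        intro i _ hni
        exact hz i (fun hiF => hni (hFsub hiF))
      rw [← h1, hICdef, Finset.sum_biUnion hpd]
      apply Finset.sum_eq_zero
      intro j hj
      have h2 : ∑ i ∈ Fj j ∩ Frac, d i = ∑ i ∈ Fj j, d i := by
        apply Finset.sum_subset Finset.inter_subset_left
        intro i hi hni
        exact hz i (fun hiF => hni (Finset.mem_inter.2 ⟨hi, hiF⟩))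
      rw [h2]
      exact hcoreAll j hj
    exact perturb_contradiction k m Cstar Cfull Cpart Fj Bj P hP ystar hext hBlt hFlt d hne
      (hsupp' d hz) hcoreAll hcovd (Or.inl hsum0)
  · by_cases hOut1 : Out.card = 1
    · by_cases hct : ∑ i, ystar i = (k : ℝ)
      -- Case: cardinality tight and exactly one fractional coordinate outside cores:
      -- direct integrality contradiction
      · obtain ⟨i0, hi0⟩ := Finset.card_eq_one.1 hOut1
        have hi0Out : i0 ∈ Out := hi0 ▸ Finset.mem_singleton_self i0
        obtain ⟨hi0F, hi0nIC⟩ := Finset.mem_sdiff.1 hi0Out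
        set Bcore : Finset F := Cstar.biUnion Fj with hBcdef
        have hpdB : (↑Cstar : Set ι).PairwiseDisjoint Fj := by
          intro x hx y hy hxy; exact hFdisj x hx y hy hxy
        have hBsum : ∑ i ∈ Bcore, ystar i = (Cstar.card : ℝ) := by
          rw [hBcdef, Finset.sum_biUnion hpdB]
          rw [Finset.sum_congr rfl (fun j hj => hcore j hj)]
          simp
        have hICB : InCore ⊆ Bcore := by
          intro i hi
          obtain ⟨j, hj, hij⟩ := Finset.mem_biUnion.1 hi
          exact Finset.mem_biUnion.2 ⟨j, hj, (Finset.mem_inter.1 hij).1⟩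
        have hi0R : i0 ∈ Finset.univ \ Bcore := by
          refine Finset.mem_sdiff.2 ⟨Finset.mem_univ _, ?_⟩
          intro hB
          obtain ⟨j, hj, hij⟩ := Finset.mem_biUnion.1 hB
          exact hi0nIC (Finset.mem_biUnion.2 ⟨j, hj, Finset.mem_inter.2 ⟨hij, hi0F⟩⟩)
        have hsplit := Finset.sum_inter_add_sum_sdiff Finset.univ Bcore ystar
        rw [Finset.univ_inter] at hsplit
        have hRsplit := Finset.sum_eq_sum_sdiff_singleton_add hi0R ystar
        obtain ⟨n, hn⟩ := sum_binary' ((Finset.univ \ Bcore) \ {i0}) ystar (by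
          intro i hi
          obtain ⟨hiR, hine⟩ := Finset.mem_sdiff.1 hi
          obtain ⟨_, hinB⟩ := Finset.mem_sdiff.1 hiR
          apply hbin
          intro hiF
          have hiO : i ∈ Out := Finset.mem_sdiff.2 ⟨hiF, fun hIC => hinB (hICB hIC)⟩
          rw [hi0] at hiO
          exact hine hiO)
        obtain ⟨hy0, hy1⟩ := (hmemFrac i0).1 hi0F
        have hkey : ystar i0 = (k : ℝ) - (Cstar.card : ℝ) - (n : ℝ) := by
          rw [hRsplit, hn] at hsplit
          rw [hBsum] at hsplit
          rw [hct] at hsplit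
          linarith
        have h1 : (0 : ℝ) < ((k : ℤ) - (Cstar.card : ℤ) - (n : ℤ) : ℤ) := by
          push_cast; linarith
        have h2 : (((k : ℤ) - (Cstar.card : ℤ) - (n : ℤ) : ℤ) : ℝ) < 1 := by
          push_cast; linarith
        have h1' : 0 < (k : ℤ) - (Cstar.card : ℤ) - (n : ℤ) := by exact_mod_cast h1
        have h2' : (k : ℤ) - (Cstar.card : ℤ) - (n : ℤ) < 1 := by exact_mod_cast h2
        omega
      -- Case: cardinality slack
      · obtain ⟨d, hne, hz, hT0, hcovd, _⟩ := getd 1 le_rfl (by omega)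
        have hcoreAll := hupg d hz hT0
        exact perturb_contradiction k m Cstar Cfull Cpart Fj Bj P hP ystar hext hBlt hFlt d hne
          (hsupp' d hz) hcoreAll hcovd (Or.inr (lt_of_le_of_ne hcle hct))
    -- Case: at least two fractional coordinates outside cores
    · obtain ⟨d, hne, hz, hT0, hcovd, hs0⟩ := getd 2 (by omega) (by omega)
      have hcoreAll := hupg d hz hT0
      exact perturb_contradiction k m Cstar Cfull Cpart Fj Bj P hP ystar hext hBlt hFlt d hne
        (hsupp' d hz) hcoreAll hcovd (Or.inl (hs0 rfl))
end

section
/- Let F be a finite set, w ∈ ℝ_{≥0}^F, W ≥ 0, and let {F_j}_{j∈J} be a family of pairwise disjoint subsets of F. Then every extreme point of the polytope {y ∈ [0,1]^F : Σ_{i∈F_j} y_i = 1 for all j ∈ J, and Σ_{i∈F} w_i y_i ≤ W} has at most two coordinates lying strictly between 0 and 1. -/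
open Finset

/-- Almost-integrality for knapsack median: every extreme point of the intersection of
the unit cube with a family of disjoint equality constraints `y(F_j) = 1` and a single
knapsack constraint `Σ w_i y_i ≤ W` has at most two fractional coordinates. -/
theorem stmt9 {F ι : Type*} [Fintype F] [DecidableEq F]
    (w : F → ℝ) (hw : ∀ i, 0 ≤ w i) (W : ℝ) (hW : 0 ≤ W)
    (J : Finset ι) (Fj : ι → Finset F)
    (hdisj : ∀ j ∈ J, ∀ j' ∈ J, j ≠ j' → Disjoint (Fj j) (Fj j'))
    (P : Set (F → ℝ))
    (hP : P = {y : F → ℝ |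
        (∀ i, 0 ≤ y i ∧ y i ≤ 1) ∧
        (∀ j ∈ J, ∑ i ∈ Fj j, y i = 1) ∧
        (∑ i, w i * y i ≤ W)})
    (ystar : F → ℝ) (hext : ystar ∈ Set.extremePoints ℝ P) :
    (Finset.univ.filter fun i => 0 < ystar i ∧ ystar i < 1).card ≤ 2 := by
  classical
  by_contra hcard
  push_neg at hcard
  set S : Finset F := univ.filter fun i => 0 < ystar i ∧ ystar i < 1 with hSdef
  have hyP : ystar ∈ P := hext.1
  rw [hP] at hyP
  obtain ⟨hbound, heq, hknap⟩ := hyP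
  have hSfrac : ∀ i ∈ S, 0 < ystar i ∧ ystar i < 1 := by
    intro i hi; simpa [hSdef] using hi
  have hnotS : ∀ i, i ∉ S → ystar i = 0 ∨ ystar i = 1 := by
    intro i hi
    simp only [hSdef, mem_filter, mem_univ, true_and, not_and_or, not_lt] at hi
    rcases hi with h | h
    · exact Or.inl (le_antisymm h (hbound i).1)
    · exact Or.inr (le_antisymm (hbound i).2 h)
  set J' : Finset ι := J.filter (fun j => ((Fj j) ∩ S).Nonempty) with hJ'def
  -- each j ∈ J' has at least 2 fractional coordinates
  have htwo : ∀ j ∈ J', 2 ≤ ((Fj j) ∩ S).card := by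
    intro j hj
    rw [hJ'def, mem_filter] at hj
    obtain ⟨hjJ, i, hi⟩ := hj
    rw [mem_inter] at hi
    by_contra hlt
    push_neg at hlt
    have honly : ∀ k ∈ Fj j, k ≠ i → k ∉ S := by
      intro k hk hki hkS
      have : 2 ≤ ((Fj j) ∩ S).card := by
        apply Finset.one_lt_card.mpr
        exact ⟨i, mem_inter.mpr ⟨hi.1, hi.2⟩, k, mem_inter.mpr ⟨hk, hkS⟩, (Ne.symm hki)⟩
      omega
    have hsum : ystar i + ∑ k ∈ (Fj j).erase i, ystar k = 1 := by
      rw [Finset.add_sum_erase _ _ hi.1]; exact heq j hjJ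
    have hfi := hSfrac i hi.2
    by_cases hone : ∃ k ∈ (Fj j).erase i, ystar k = 1
    · obtain ⟨k, hk, hk1⟩ := hone
      have : (1:ℝ) ≤ ∑ k ∈ (Fj j).erase i, ystar k := by
        rw [← hk1]
        exact Finset.single_le_sum (fun m _ => (hbound m).1) hk
      linarith
    · push_neg at hone
      have : ∑ k ∈ (Fj j).erase i, ystar k = 0 := by
        apply Finset.sum_eq_zero
        intro k hk
        have hk' := honly k (Finset.mem_of_mem_erase hk) (Finset.ne_of_mem_erase hk)
        rcases hnotS k hk' with h | h
        · exact h
        · exact absurd h (hone k hk)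
      linarith
  -- counting: 2 * |J'| ≤ |S|
  have hcount : 2 * J'.card ≤ S.card := by
    have hdisj' : ∀ j ∈ J', ∀ j' ∈ J', j ≠ j' → Disjoint ((Fj j) ∩ S) ((Fj j') ∩ S) := by
      intro j hj j' hj' hne
      exact Finset.disjoint_of_subset_left (inter_subset_left)
        (Finset.disjoint_of_subset_right (inter_subset_left)
          (hdisj j (mem_of_mem_filter j hj) j' (mem_of_mem_filter j' hj') hne))
    calc 2 * J'.card = ∑ _j ∈ J', 2 := by rw [Finset.sum_const, smul_eq_mul, mul_comm]
    _ ≤ ∑ j ∈ J', ((Fj j) ∩ S).card := Finset.sum_le_sum htwo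
    _ = (J'.biUnion fun j => (Fj j) ∩ S).card := (Finset.card_biUnion hdisj').symm
    _ ≤ S.card := by
        apply Finset.card_le_card
        intro x hx
        simp only [Finset.mem_biUnion] at hx
        obtain ⟨j, _, hx⟩ := hx
        exact (mem_inter.mp hx).2
  -- the linear map of active constraints
  let L : (F → ℝ) →ₗ[ℝ] ((J' → ℝ) × ℝ × ((Sᶜ : Finset F) → ℝ)) :=
    LinearMap.prod
      (LinearMap.pi fun j : J' => ∑ i ∈ Fj j, LinearMap.proj i)
      (LinearMap.prod
        (∑ i : F, w i • LinearMap.proj i)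
        (LinearMap.pi fun i : (Sᶜ : Finset F) => LinearMap.proj (i : F)))
  have hfr : ¬ Function.Injective L := by
    intro hinj
    have hle := LinearMap.finrank_le_finrank_of_injective hinj
    have h1 : Module.finrank ℝ (F → ℝ) = Fintype.card F := Module.finrank_pi ℝ
    have h2 : Module.finrank ℝ ((J' → ℝ) × ℝ × ((Sᶜ : Finset F) → ℝ))
        = J'.card + (1 + (Sᶜ : Finset F).card) := by
      simp only [Module.finrank_prod, Module.finrank_pi, Module.finrank_self, Fintype.card_coe]
    rw [h1, h2] at hle
    have h3 : (Sᶜ : Finset F).card = Fintype.card F - S.card := Finset.card_compl S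
    have h4 : S.card ≤ Fintype.card F := Finset.card_le_univ S
    omega
  rw [← LinearMap.ker_eq_bot] at hfr
  obtain ⟨d, hdker, hd0⟩ := (Submodule.ne_bot_iff _).mp hfr
  rw [LinearMap.mem_ker] at hdker
  have hdk : ∀ j : J', ∑ i ∈ Fj j, d i = 0 := by
    intro j
    have := congrArg (fun p => p.1 j) hdker
    simpa [L, LinearMap.pi_apply, LinearMap.sum_apply, LinearMap.proj_apply] using this
  have hdw : ∑ i, w i * d i = 0 := by
    have := congrArg (fun p => p.2.1) hdker
    simpa [L, LinearMap.sum_apply, LinearMap.proj_apply, smul_eq_mul] using this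
  have hdS : ∀ i, i ∉ S → d i = 0 := by
    intro i hi
    have := congrArg (fun p => p.2.2 ⟨i, Finset.mem_compl.mpr hi⟩) hdker
    simpa [L, LinearMap.pi_apply, LinearMap.proj_apply] using this
  -- choose epsilon
  have hSne : S.Nonempty := Finset.card_pos.mp (by omega)
  set δ : ℝ := S.inf' hSne fun i => min (ystar i) (1 - ystar i) with hδ
  have hδpos : 0 < δ := by
    rw [hδ, Finset.lt_inf'_iff]
    intro i hi
    have := hSfrac i hi
    simp only [lt_min_iff]
    constructor <;> linarith [this.1, this.2]
  have hδle : ∀ i ∈ S, δ ≤ min (ystar i) (1 - ystar i) :=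
    fun i hi => Finset.inf'_le _ hi
  set M : ℝ := 1 + ∑ i, |d i| with hM
  have hMpos : 0 < M := by
    have : 0 ≤ ∑ i, |d i| := Finset.sum_nonneg fun i _ => abs_nonneg _
    linarith
  have hdM : ∀ i, |d i| ≤ M := by
    intro i
    have : |d i| ≤ ∑ i, |d i| :=
      Finset.single_le_sum (fun k _ => abs_nonneg (d k)) (mem_univ i)
    linarith
  set ε : ℝ := δ / M with hε
  have hεpos : 0 < ε := div_pos hδpos hMpos
  have hεd : ∀ i, |ε * d i| ≤ δ := by
    intro i
    rw [abs_mul, abs_of_pos hεpos, hε, div_mul_eq_mul_div, div_le_iff₀ hMpos]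
    have := hdM i
    nlinarith [abs_nonneg (d i), hδpos.le]
  -- the two perturbed points
  have hmem : ∀ s : ℝ, |s| = 1 → ystar + (s * ε) • d ∈ P := by
    intro s hs
    rw [hP]
    have hsεd : ∀ i, |s * ε * d i| ≤ δ := by
      intro i
      rw [mul_assoc, abs_mul, hs, one_mul]
      exact hεd i
    refine ⟨?_, ?_, ?_⟩
    · intro i
      simp only [Pi.add_apply, Pi.smul_apply, smul_eq_mul]
      by_cases hi : i ∈ S
      · have h1 := hδle i hi
        have h2 := hsεd i
        rw [abs_le] at h2
        simp only [le_min_iff] at h1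
        constructor <;> nlinarith [h2.1, h2.2, h1.1, h1.2]
      · rw [hdS i hi, mul_zero, add_zero]; exact hbound i
    · intro j hj
      simp only [Pi.add_apply, Pi.smul_apply, smul_eq_mul]
      rw [Finset.sum_add_distrib, heq j hj, ← Finset.mul_sum]
      by_cases hj' : j ∈ J'
      · rw [hdk ⟨j, hj'⟩, mul_zero, add_zero]
      · have : ∑ i ∈ Fj j, d i = 0 := by
          apply Finset.sum_eq_zero
          intro i hi
          apply hdS
          intro hiS
          exact hj' (by rw [hJ'def, mem_filter]; exact ⟨hj, ⟨i, mem_inter.mpr ⟨hi, hiS⟩⟩⟩)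
        rw [this, mul_zero, add_zero]
    · simp only [Pi.add_apply, Pi.smul_apply, smul_eq_mul]
      calc ∑ i, w i * (ystar i + s * ε * d i)
          = ∑ i, w i * ystar i + s * ε * ∑ i, w i * d i := by
            rw [Finset.mul_sum, ← Finset.sum_add_distrib]; congr 1; ext i; ring
        _ ≤ W := by rw [hdw, mul_zero, add_zero]; exact hknap
  have h1 : ystar + ε • d ∈ P := by
    have := hmem 1 (by norm_num)
    simpa using this
  have h2 : ystar + (-ε) • d ∈ P := by
    have := hmem (-1) (by norm_num)
    simpa using this
  have hseg : ystar ∈ openSegment ℝ (ystar + ε • d) (ystar + (-ε) • d) := by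
    refine ⟨1/2, 1/2, by norm_num, by norm_num, by norm_num, ?_⟩
    ext i
    simp only [Pi.add_apply, Pi.smul_apply, smul_eq_mul, neg_mul]
    ring
  have := (hext.2 h1 h2 hseg)
  have hεd0 : ε • d = 0 := by
    have h := congrArg (fun z => z - ystar) this
    simpa [add_sub_cancel_left] using h
  exact hd0 (by simpa [hεpos.ne'] using smul_eq_zero.mp hεd0)
end

section
/- For every integer t ≥ 2 there exists an RkMed instance (F, C, d, k = 1, m = t³ + t) for which every feasible integral solution has cost at least t³ + t, while LP_basic admits a feasible fractional solution of value t² + t; hence the integrality gap of LP_basic for RkMed is at least (t² + 1)/(t + 1), and thus unbounded. Concretely one may take F = {i₁, i₂}, C the disjoint union of a set A of t³ clients all at distance 0 from i₁, and a set B of t³ + t² mutually collocated clients at distance 1 from i₂, with all distances between points of {i₁} ∪ A and points of {i₂} ∪ B equal to D = 2(t³ + t) + 1; the fractional solution opens i₁ to extent 1 − 1/t and i₂ to extent 1/t. -/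
open Finset

/-- `dmin d p S` is the distance from the point `p` to the (nonempty) set `S`
under the pseudometric `d`, i.e. `min_{i ∈ S} d p i`. -/
noncomputable def dmin {α : Type*} (d : α → α → ℝ) (p : α) (S : Finset α) : ℝ :=
  sInf ((fun i => d p i) '' (S : Set α))

def gpos (N1 : ℕ) (n : ℕ) : ℕ := if n = 1 then 1 else if n < N1 then 0 else 2

noncomputable def gdel (D : ℝ) (a b : ℕ) : ℝ :=
  if a = b then 0 else if 1 ≤ a ∧ 1 ≤ b then 1 else D

lemma gdel_tri (D : ℝ) (hD : 1 ≤ D) (a b c : ℕ) :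
    gdel D a c ≤ gdel D a b + gdel D b c := by
  unfold gdel
  split_ifs <;> first | linarith | omega

lemma dmin_singleton {α : Type*} (d : α → α → ℝ) (p i : α) :
    dmin d p {i} = d p i := by
  simp [dmin]

/-- Gap Example 1: for every `t ≥ 2` there is an RkMed instance with `k = 1` and
`m = t³ + t` on which every feasible integral solution costs at least `t³ + t`,
while the natural LP relaxation admits a feasible fractional solution of value
`t² + t`; hence the integrality gap of the natural LP is at least `(t²+1)/(t+1)`. -/
theorem stmt13 (t : ℕ) (ht : 2 ≤ t) :
    ∃ (α : Type) (F C : Finset α) (d : α → α → ℝ),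
      -- d is a pseudometric, positive on distinct facilities
      (∀ p, d p p = 0) ∧ (∀ p q, d p q = d q p) ∧ (∀ p q, 0 ≤ d p q) ∧
      (∀ p q r, d p r ≤ d p q + d q r) ∧
      Disjoint F C ∧
      (∀ i ∈ F, ∀ i' ∈ F, i ≠ i' → 0 < d i i') ∧
      t ^ 3 + t ≤ C.card ∧
      -- every integral solution (k = 1, m = t³ + t) has cost at least t³ + t
      (∀ S : Finset α, S ⊆ F → S.Nonempty → S.card ≤ 1 →
        ∀ Cs : Finset α, Cs ⊆ C → t ^ 3 + t ≤ Cs.card →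
          ((t : ℝ) ^ 3 + t) ≤ ∑ j ∈ Cs, dmin d j S) ∧
      -- the natural LP has a feasible fractional solution of value t² + t
      (∃ (x : α → α → ℝ) (y : α → ℝ),
        (∀ i ∈ F, ∀ j ∈ C, 0 ≤ x i j) ∧
        (∀ i ∈ F, 0 ≤ y i) ∧
        (∀ i ∈ F, ∀ j ∈ C, x i j ≤ y i) ∧
        (∀ j ∈ C, ∑ i ∈ F, x i j ≤ 1) ∧
        (∑ i ∈ F, y i ≤ (1 : ℝ)) ∧
        (((t : ℝ) ^ 3 + t) ≤ ∑ i ∈ F, ∑ j ∈ C, x i j) ∧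
        ∑ i ∈ F, ∑ j ∈ C, x i j * d i j = (t : ℝ) ^ 2 + t) := by
  have ht0 : (0:ℕ) < t := by omega
  have htR : (2:ℝ) ≤ (t:ℝ) := by exact_mod_cast ht
  have htR3 : (0:ℝ) ≤ (t:ℝ) ^ 3 := by positivity
  set N1 : ℕ := 2 + t ^ 3 with hN1
  set N2 : ℕ := N1 + (t ^ 3 + t ^ 2) with hN2
  set D : ℝ := 2 * ((t:ℝ) ^ 3 + (t:ℝ)) + 1 with hD
  have hD1 : 1 ≤ D := by rw [hD]; linarith
  have hDm : (t:ℝ) ^ 3 + t ≤ D := by rw [hD]; linarith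
  have hD0 : 0 < D := by linarith
  set d : ℕ → ℕ → ℝ := fun p q => gdel D (gpos N1 p) (gpos N1 q) with hd
  -- position computations
  have g0 : gpos N1 0 = 0 := by
    simp only [gpos]; rw [if_neg (by omega), if_pos (by omega)]
  have g1 : gpos N1 1 = 1 := by simp [gpos]
  have gA : ∀ j, 2 ≤ j → j < N1 → gpos N1 j = 0 := by
    intro j h1 h2; simp only [gpos]; rw [if_neg (by omega), if_pos h2]
  have gB : ∀ j, N1 ≤ j → gpos N1 j = 2 := by
    intro j h1; simp only [gpos]; rw [if_neg (by omega), if_neg (by omega)]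
  -- gdel computations
  have e00 : gdel D 0 0 = 0 := by simp [gdel]
  have e01 : gdel D 0 1 = D := by norm_num [gdel]
  have e02 : gdel D 0 2 = D := by norm_num [gdel]
  have e10 : gdel D 1 0 = D := by norm_num [gdel]
  have e12 : gdel D 1 2 = 1 := by norm_num [gdel]
  have e20 : gdel D 2 0 = D := by norm_num [gdel]
  have e21 : gdel D 2 1 = 1 := by norm_num [gdel]
  have hdnn : ∀ p q, (0:ℝ) ≤ d p q := by
    intro p q; simp only [hd, gdel]; split_ifs <;> linarith
  refine ⟨ℕ, {0, 1}, Finset.Ico 2 N2, d, ?_, ?_, hdnn, ?_, ?_, ?_, ?_, ?_, ?_⟩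
  · intro p; simp [hd, gdel]
  · intro p q
    simp only [hd, gdel]
    split_ifs <;> first | rfl | omega | tauto
  · intro p q r; exact gdel_tri D hD1 _ _ _
  · rw [Finset.disjoint_left]; intro a ha hb
    simp at ha; simp at hb; omega
  · intro i hi i' hi' hne
    simp at hi hi'
    simp only [hd]
    rcases hi with rfl | rfl <;> rcases hi' with rfl | rfl <;>
      first
        | exact absurd rfl hne
        | (rw [g0, g1, e01]; exact hD0)
        | (rw [g1, g0, e10]; exact hD0)
  · rw [Nat.card_Ico]
    have h1 : t ≤ t ^ 2 := Nat.le_self_pow (by norm_num) t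
    omega
  · -- integral lower bound
    intro S hSF hSne hScard Cs hCsC hCscard
    obtain ⟨i, hi⟩ := hSne
    have hSi : S = {i} := by
      apply Finset.eq_singleton_iff_unique_mem.mpr
      refine ⟨hi, fun b hb => ?_⟩
      by_contra hne
      have : 2 ≤ S.card := Finset.one_lt_card.mpr ⟨b, hb, i, hi, hne⟩
      omega
    subst hSi
    have hi01 : i = 0 ∨ i = 1 := by have := hSF hi; simpa using this
    have hsum_eq : ∀ j, dmin d j {i} = d j i := fun j => dmin_singleton d j i
    rcases hi01 with rfl | rfl
    · -- S = {0}: some client in B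
      have hB : ∃ j ∈ Cs, N1 ≤ j := by
        by_contra h
        push_neg at h
        have hsub : Cs ⊆ Finset.Ico 2 N1 := by
          intro j hj
          have hj2 := hCsC hj
          rw [Finset.mem_Ico] at hj2 ⊢
          exact ⟨hj2.1, h j hj⟩
        have := Finset.card_le_card hsub
        rw [Nat.card_Ico] at this
        omega
      obtain ⟨j, hjCs, hjB⟩ := hB
      have hdjD : d j 0 = D := by
        simp only [hd]; rw [gB j hjB, g0, e20]
      calc ((t:ℝ)^3 + t) ≤ D := hDm
        _ = d j 0 := hdjD.symm
        _ ≤ ∑ j' ∈ Cs, d j' 0 :=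
            Finset.single_le_sum (f := fun k => d k 0) (fun k _ => hdnn k 0) hjCs
        _ = ∑ j' ∈ Cs, dmin d j' {0} :=
            Finset.sum_congr rfl (fun k _ => (hsum_eq k).symm)
    · -- S = {1}: each client at distance ≥ 1
      have hlow : ∀ j ∈ Cs, (1:ℝ) ≤ dmin d j {1} := by
        intro j hj
        rw [hsum_eq]
        have hj2 := hCsC hj
        rw [Finset.mem_Ico] at hj2
        simp only [hd]
        by_cases hc : j < N1
        · rw [gA j hj2.1 hc, g1, e01]; exact hD1
        · rw [gB j (by omega), g1, e21]
      calc ((t:ℝ)^3 + t) ≤ (Cs.card : ℝ) := by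
            have : ((t^3 + t : ℕ) : ℝ) ≤ (Cs.card : ℝ) := by exact_mod_cast hCscard
            push_cast at this; linarith
        _ = ∑ _j ∈ Cs, (1:ℝ) := by simp
        _ ≤ ∑ j ∈ Cs, dmin d j {1} := Finset.sum_le_sum hlow
  · -- fractional solution
    set x : ℕ → ℕ → ℝ := fun i j =>
      if i = 0 ∧ 2 ≤ j ∧ j < N1 then 1 - 1/(t:ℝ)
      else if i = 1 ∧ N1 ≤ j ∧ j < N2 then 1/(t:ℝ) else 0 with hx
    set y : ℕ → ℝ := fun i => if i = 0 then 1 - 1/(t:ℝ) else if i = 1 then 1/(t:ℝ) else 0 with hy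
    have htpos : (0:ℝ) < (t:ℝ) := by linarith
    have htne : (t:ℝ) ≠ 0 := ne_of_gt htpos
    have hinv0 : (0:ℝ) ≤ 1/(t:ℝ) := by positivity
    have hinv1 : 1/(t:ℝ) ≤ 1 := by rw [div_le_one htpos]; linarith
    have h12 : 2 ≤ N1 := by omega
    have h2 : N1 ≤ N2 := by omega
    -- value lemmas for x
    have x0A : ∀ j, 2 ≤ j → j < N1 → x 0 j = 1 - 1/(t:ℝ) := by
      intro j h1 h2'; simp [hx, h1, h2']
    have x0B : ∀ j, N1 ≤ j → x 0 j = 0 := by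
      intro j h1
      have h2' : ¬ j < N1 := by omega
      simp [hx, h2']
    have x1A : ∀ j, j < N1 → x 1 j = 0 := by
      intro j h1
      have h2' : ¬ N1 ≤ j := by omega
      simp [hx, h2']
    have x1B : ∀ j, N1 ≤ j → j < N2 → x 1 j = 1/(t:ℝ) := by
      intro j h1 h2'; simp [hx, h1, h2']
    have y0 : y 0 = 1 - 1/(t:ℝ) := by simp [hy]
    have y1 : y 1 = 1/(t:ℝ) := by simp [hy]
    have xval : ∀ i, i = 0 ∨ i = 1 → ∀ j, 2 ≤ j → j < N2 →
        (x i j = 0 ∨ x i j = 1 - 1/(t:ℝ) ∨ x i j = 1/(t:ℝ)) := by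
      intro i hi j hj1 hj2
      by_cases hc : j < N1 <;> rcases hi with rfl | rfl
      · right; left; exact x0A j hj1 hc
      · left; exact x1A j hc
      · left; exact x0B j (by omega)
      · right; right; exact x1B j (by omega) hj2
    have hcard1 : (Finset.Ico 2 N1).card = t ^ 3 := by rw [Nat.card_Ico]; omega
    have hcard2 : (Finset.Ico N1 N2).card = t ^ 3 + t ^ 2 := by rw [Nat.card_Ico]; omega
    refine ⟨x, y, ?_, ?_, ?_, ?_, ?_, ?_, ?_⟩
    · intro i hi j hj
      simp at hi; rw [Finset.mem_Ico] at hj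
      rcases xval i hi j hj.1 hj.2 with h | h | h <;> rw [h] <;> linarith
    · intro i hi; simp at hi
      rcases hi with rfl | rfl
      · rw [y0]; linarith
      · rw [y1]; linarith
    · intro i hi j hj
      simp at hi; rw [Finset.mem_Ico] at hj
      rcases hi with rfl | rfl <;> by_cases hc : j < N1
      · rw [x0A j hj.1 hc, y0]
      · rw [x0B j (by omega), y0]; linarith
      · rw [x1A j hc, y1]; linarith
      · rw [x1B j (by omega) hj.2, y1]
    · intro j hj
      rw [Finset.mem_Ico] at hj
      rw [Finset.sum_pair (by norm_num : (0:ℕ) ≠ 1)]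
      by_cases hc : j < N1
      · rw [x0A j hj.1 hc, x1A j hc]; linarith
      · rw [x0B j (by omega), x1B j (by omega) hj.2]; linarith
    · rw [Finset.sum_pair (by norm_num : (0:ℕ) ≠ 1), y0, y1]
      linarith
    · rw [Finset.sum_pair (by norm_num : (0:ℕ) ≠ 1)]
      have hs0 : ∑ j ∈ Finset.Ico 2 N2, x 0 j = (t:ℝ)^3 * (1 - 1/(t:ℝ)) := by
        rw [← Finset.sum_Ico_consecutive _ h12 h2,
          Finset.sum_congr rfl (fun j hj => x0A j (Finset.mem_Ico.mp hj).1 (Finset.mem_Ico.mp hj).2),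
          Finset.sum_congr rfl (fun j hj => x0B j (Finset.mem_Ico.mp hj).1),
          Finset.sum_const, Finset.sum_const, hcard1]
        push_cast; ring
      have hs1 : ∑ j ∈ Finset.Ico 2 N2, x 1 j = ((t:ℝ)^3 + (t:ℝ)^2) * (1/(t:ℝ)) := by
        rw [← Finset.sum_Ico_consecutive _ h12 h2,
          Finset.sum_congr rfl (fun j hj => x1A j (Finset.mem_Ico.mp hj).2),
          Finset.sum_congr rfl (fun j hj => x1B j (Finset.mem_Ico.mp hj).1 (Finset.mem_Ico.mp hj).2),
          Finset.sum_const, Finset.sum_const, hcard2]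
        push_cast; ring
      rw [hs0, hs1]
      have key : (t:ℝ)^3 * (1 - 1/(t:ℝ)) + ((t:ℝ)^3 + (t:ℝ)^2) * (1/(t:ℝ))
          = (t:ℝ)^3 + (t:ℝ) := by field_simp; ring
      rw [key]
    · rw [Finset.sum_pair (by norm_num : (0:ℕ) ≠ 1)]
      have hs0 : ∑ j ∈ Finset.Ico 2 N2, x 0 j * d 0 j = 0 := by
        apply Finset.sum_eq_zero
        intro j hj
        rw [Finset.mem_Ico] at hj
        by_cases hc : j < N1
        · have hdj : d 0 j = 0 := by
            simp only [hd]; rw [g0, gA j hj.1 hc, e00]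
          rw [hdj, mul_zero]
        · rw [x0B j (by omega), zero_mul]
      have hs1 : ∑ j ∈ Finset.Ico 2 N2, x 1 j * d 1 j
          = ((t:ℝ)^3 + (t:ℝ)^2) * (1/(t:ℝ) * 1) := by
        rw [← Finset.sum_Ico_consecutive _ h12 h2]
        have e1 : ∑ j ∈ Finset.Ico 2 N1, x 1 j * d 1 j = 0 := by
          apply Finset.sum_eq_zero
          intro j hj
          rw [Finset.mem_Ico] at hj
          rw [x1A j hj.2, zero_mul]
        have e2 : ∑ j ∈ Finset.Ico N1 N2, x 1 j * d 1 j
            = ((t:ℝ)^3 + (t:ℝ)^2) * (1/(t:ℝ) * 1) := by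
          have hterm : ∀ j ∈ Finset.Ico N1 N2, x 1 j * d 1 j = 1/(t:ℝ) * 1 := by
            intro j hj
            rw [Finset.mem_Ico] at hj
            have hdj : d 1 j = 1 := by
              simp only [hd]; rw [g1, gB j hj.1, e12]
            rw [x1B j hj.1 hj.2, hdj]
          rw [Finset.sum_congr rfl hterm, Finset.sum_const, hcard2]
          push_cast; ring
        rw [e1, e2]; ring
      rw [hs0, hs1]
      field_simp
      ring
end

section
/- For every integer t ≥ 2 there exists an RkMed instance (F, C, d, k = 2, m = 4t + 1) for which every feasible integral solution has cost at least t + 1, while LP_basic admits a feasible fractional solution of value 2; hence the integrality gap of LP_basic for RkMed is at least (t + 1)/2, and thus unbounded. Concretely one may take F = {i₀, i₁, i₂}, C consisting of 2t clients collocated with i₀, 2t clients collocated with i₁, and t clients collocated with i₂, with d(i₀, i₁) = 1 and all distances between points on the {i₀, i₁} side and points on the {i₂} side equal to D = t + 2; the fractional solution opens i₀ fully, i₁ to extent 1 − 1/t, and i₂ to extent 1/t. -/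
open Finset

/- Auxiliary: the embedding of points into the real line. -/
noncomputable def fgap (t n : ℕ) : ℝ :=
  if n = 0 then 0 else if n = 1 then 1 else if n = 2 then (t : ℝ) + 2
  else if n ≤ 2*t+2 then 0 else if n ≤ 4*t+2 then 1 else (t : ℝ) + 2

lemma fgap0 (t : ℕ) : fgap t 0 = 0 := by simp [fgap]
lemma fgap1 (t : ℕ) : fgap t 1 = 1 := by simp [fgap]
lemma fgap2 (t : ℕ) : fgap t 2 = (t : ℝ) + 2 := by simp [fgap]

lemma fgapA (t n : ℕ) (h1 : 2 < n) (h2 : n ≤ 2*t+2) : fgap t n = 0 := by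
  simp only [fgap]
  rw [if_neg (by omega), if_neg (by omega), if_neg (by omega), if_pos h2]

lemma fgapB (t n : ℕ) (h1 : 2*t+2 < n) (h2 : n ≤ 4*t+2) (ht : 1 ≤ t) : fgap t n = 1 := by
  simp only [fgap]
  rw [if_neg (by omega), if_neg (by omega), if_neg (by omega), if_neg (by omega), if_pos h2]

lemma fgapE (t n : ℕ) (h1 : 4*t+2 < n) (ht : 1 ≤ t) : fgap t n = (t : ℝ) + 2 := by
  simp only [fgap]
  rw [if_neg (by omega), if_neg (by omega), if_neg (by omega), if_neg (by omega),
    if_neg (by omega)]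

lemma dmin_ge {α : Type*} {d : α → α → ℝ} {p : α} {S : Finset α} (hS : S.Nonempty)
    {c : ℝ} (h : ∀ i ∈ S, c ≤ d p i) : c ≤ dmin d p S := by
  obtain ⟨i0, hi0⟩ := hS
  refine le_csInf ⟨d p i0, ⟨i0, hi0, rfl⟩⟩ ?_
  rintro x ⟨i, hi, rfl⟩
  exact h i hi

lemma sum_dmin_lb {α : Type*} [DecidableEq α] (d : α → α → ℝ) (S Cs G : Finset α)
    (c : ℝ) (hS : S.Nonempty) (hd : ∀ p q, 0 ≤ d p q)
    (hG : ∀ j ∈ G, c ≤ dmin d j S) :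
    c * ((Cs ∩ G).card : ℝ) ≤ ∑ j ∈ Cs, dmin d j S := by
  have h0 : ∀ j ∈ Cs, 0 ≤ dmin d j S := fun j _ => dmin_ge hS (fun i _ => hd j i)
  calc c * ((Cs ∩ G).card : ℝ) = ∑ _j ∈ Cs ∩ G, c := by
        rw [Finset.sum_const, nsmul_eq_mul]; ring
    _ ≤ ∑ j ∈ Cs ∩ G, dmin d j S :=
        Finset.sum_le_sum (fun j hj => hG j (Finset.mem_inter.mp hj).2)
    _ ≤ ∑ j ∈ Cs, dmin d j S :=
        Finset.sum_le_sum_of_subset_of_nonneg Finset.inter_subset_left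
          (fun j hj _ => h0 j hj)

lemma count_inter {α : Type*} [DecidableEq α] (C Cs G : Finset α) (hCs : Cs ⊆ C)
    (hG : G ⊆ C) (n : ℕ) (h : n + (C.card - G.card) ≤ Cs.card) :
    n ≤ (Cs ∩ G).card := by
  have h1 : (Cs ∩ G).card + (Cs \ G).card = Cs.card := Finset.card_inter_add_card_sdiff Cs G
  have h2 : (Cs \ G).card ≤ (C \ G).card :=
    Finset.card_le_card (Finset.sdiff_subset_sdiff hCs le_rfl)
  have h3 : (C \ G).card = C.card - G.card := Finset.card_sdiff_of_subset hG
  have h4 : G.card ≤ C.card := Finset.card_le_card hG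
  omega

lemma sum_Ioc_const (a b k : ℕ) (g : ℕ → ℝ) (c : ℝ) (hk : b - a = k)
    (h : ∀ j, a < j → j ≤ b → g j = c) : ∑ j ∈ Finset.Ioc a b, g j = (k : ℝ) * c := by
  rw [Finset.sum_congr rfl fun j hj => h j (Finset.mem_Ioc.mp hj).1 (Finset.mem_Ioc.mp hj).2,
    Finset.sum_const, Nat.card_Ioc, hk, nsmul_eq_mul]

/- The fractional assignment. -/
noncomputable def xgap (t : ℕ) : ℕ → ℕ → ℝ := fun i j =>
  if i = 0 then (if j ≤ 2*t+2 then 1 else if j ≤ 4*t+2 then 1/t else 0)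
  else if i = 1 then (if 2*t+2 < j then (if j ≤ 4*t+2 then 1 - 1/t else 0) else 0)
  else if i = 2 then (if 4*t+2 < j then 1/t else 0) else 0

noncomputable def ygap (t : ℕ) : ℕ → ℝ := fun i =>
  if i = 0 then 1 else if i = 1 then 1 - 1/(t:ℝ) else if i = 2 then 1/(t:ℝ) else 0

set_option maxHeartbeats 1000000 in
/-- Gap Example 2: for every `t ≥ 2` there is an RkMed instance with `k = 2` and
`m = 4t + 1` on which every feasible integral solution costs at least `t + 1`,
while the natural LP relaxation admits a feasible fractional solution of value `2`;
hence the integrality gap of the natural LP is at least `(t+1)/2`. -/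
theorem stmt14 (t : ℕ) (ht : 2 ≤ t) :
    ∃ (α : Type) (F C : Finset α) (d : α → α → ℝ),
      -- d is a pseudometric, positive on distinct facilities
      (∀ p, d p p = 0) ∧ (∀ p q, d p q = d q p) ∧ (∀ p q, 0 ≤ d p q) ∧
      (∀ p q r, d p r ≤ d p q + d q r) ∧
      Disjoint F C ∧
      (∀ i ∈ F, ∀ i' ∈ F, i ≠ i' → 0 < d i i') ∧
      4 * t + 1 ≤ C.card ∧
      -- every integral solution (k = 2, m = 4t + 1) has cost at least t + 1
      (∀ S : Finset α, S ⊆ F → S.Nonempty → S.card ≤ 2 →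
        ∀ Cs : Finset α, Cs ⊆ C → 4 * t + 1 ≤ Cs.card →
          ((t : ℝ) + 1) ≤ ∑ j ∈ Cs, dmin d j S) ∧
      -- the natural LP has a feasible fractional solution of value 2
      (∃ (x : α → α → ℝ) (y : α → ℝ),
        (∀ i ∈ F, ∀ j ∈ C, 0 ≤ x i j) ∧
        (∀ i ∈ F, 0 ≤ y i) ∧
        (∀ i ∈ F, ∀ j ∈ C, x i j ≤ y i) ∧
        (∀ j ∈ C, ∑ i ∈ F, x i j ≤ 1) ∧
        (∑ i ∈ F, y i ≤ (2 : ℝ)) ∧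
        ((4 * (t : ℝ) + 1) ≤ ∑ i ∈ F, ∑ j ∈ C, x i j) ∧
        ∑ i ∈ F, ∑ j ∈ C, x i j * d i j = 2) := by
  have ht1 : 1 ≤ t := by omega
  have htR : (1 : ℝ) ≤ (t : ℝ) := by exact_mod_cast ht1
  have htpos : (0 : ℝ) < (t : ℝ) := by linarith
  have htne : (t : ℝ) ≠ 0 := ne_of_gt htpos
  have hinv_pos : (0 : ℝ) ≤ 1/(t:ℝ) := by positivity
  have hinv_le : 1/(t:ℝ) ≤ 1 := by
    rw [div_le_one htpos]; exact htR
  have hinv_pos' : (0:ℝ) ≤ ((t:ℝ))⁻¹ := by positivity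
  have hinv_le' : ((t:ℝ))⁻¹ ≤ 1 := by
    rw [inv_le_one_iff₀]; right; exact htR
  refine ⟨ℕ, Finset.range 3, Finset.Ioc 2 (5*t+2), fun p q => |fgap t p - fgap t q|,
    ?_, ?_, ?_, ?_, ?_, ?_, ?_, ?_, ?_⟩
  · intro p; simp
  · intro p q; exact abs_sub_comm _ _
  · intro p q; exact abs_nonneg _
  · intro p q r; exact abs_sub_le _ _ _
  · rw [Finset.disjoint_left]
    intro a ha hb
    simp only [Finset.mem_range] at ha
    simp only [Finset.mem_Ioc] at hb
    omega
  · intro i hi i' hi' hne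
    simp only [Finset.mem_range] at hi hi'
    rw [abs_sub_pos]
    interval_cases i <;> interval_cases i' <;>
      simp_all [fgap0, fgap1, fgap2] <;> intro h <;> linarith
  · rw [Nat.card_Ioc]; omega
  · -- integral lower bound
    intro S hSF hSne hScard Cs hCsC hCscard
    have hd : ∀ p q : ℕ, 0 ≤ |fgap t p - fgap t q| := fun p q => abs_nonneg _
    have hCcard : (Finset.Ioc 2 (5*t+2)).card = 5*t := by rw [Nat.card_Ioc]; omega
    by_cases h2 : 2 ∈ S
    · have h01 : 0 ∉ S ∨ 1 ∉ S := by
        by_contra h; push_neg at h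
        have hsub : ({0, 1, 2} : Finset ℕ) ⊆ S := by
          intro x hx
          simp only [Finset.mem_insert, Finset.mem_singleton] at hx
          rcases hx with rfl | rfl | rfl
          · exact h.1
          · exact h.2
          · exact h2
        have := Finset.card_le_card hsub
        simp at this
        omega
      rcases h01 with h0 | h1
      ·
        set G := Finset.Ioc 2 (2*t+2) with hG
        have hGsub : G ⊆ Finset.Ioc 2 (5*t+2) := by
          intro x hx; simp only [hG, Finset.mem_Ioc] at hx ⊢; omega
        have hGbound : ∀ j ∈ G, (1 : ℝ) ≤ dmin (fun p q => |fgap t p - fgap t q|) j S := by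
          intro j hj
          simp only [hG, Finset.mem_Ioc] at hj
          apply dmin_ge hSne
          intro i hi
          have hi3 : i < 3 := by simpa using hSF hi
          have hne0 : i ≠ 0 := fun h => h0 (h ▸ hi)
          have : i = 1 ∨ i = 2 := by omega
          rw [fgapA t j hj.1 hj.2]
          rcases this with rfl | rfl
          · rw [fgap1]; norm_num
          · rw [fgap2]
            rw [abs_of_nonpos (by linarith)]
            linarith
        have hcount : t + 1 ≤ (Cs ∩ G).card := by
          apply count_inter _ _ _ hCsC hGsub
          rw [hCcard, hG, Nat.card_Ioc]
          omega
        have hsum := sum_dmin_lb (fun p q => |fgap t p - fgap t q|) S Cs G 1 hSne hd hGbound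
        have hcast : ((t : ℝ) + 1) ≤ ((Cs ∩ G).card : ℝ) := by
          have : ((t + 1 : ℕ) : ℝ) ≤ ((Cs ∩ G).card : ℝ) := Nat.cast_le.mpr hcount
          push_cast at this
          linarith
        linarith
      · -- 1 ∉ S, use B (at 1)
        set G := Finset.Ioc (2*t+2) (4*t+2) with hG
        have hGsub : G ⊆ Finset.Ioc 2 (5*t+2) := by
          intro x hx; simp only [hG, Finset.mem_Ioc] at hx ⊢; omega
        have hGbound : ∀ j ∈ G, (1 : ℝ) ≤ dmin (fun p q => |fgap t p - fgap t q|) j S := by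
          intro j hj
          simp only [hG, Finset.mem_Ioc] at hj
          apply dmin_ge hSne
          intro i hi
          have hi3 : i < 3 := by simpa using hSF hi
          have hne1 : i ≠ 1 := fun h => h1 (h ▸ hi)
          have : i = 0 ∨ i = 2 := by omega
          rw [fgapB t j hj.1 hj.2 ht1]
          rcases this with rfl | rfl
          · rw [fgap0]; norm_num
          · rw [fgap2]
            rw [abs_of_nonpos (by linarith)]
            linarith
        have hcount : t + 1 ≤ (Cs ∩ G).card := by
          apply count_inter _ _ _ hCsC hGsub
          rw [hCcard, hG, Nat.card_Ioc]
          omega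
        have hsum := sum_dmin_lb (fun p q => |fgap t p - fgap t q|) S Cs G 1 hSne hd hGbound
        have hcast : ((t : ℝ) + 1) ≤ ((Cs ∩ G).card : ℝ) := by
          have : ((t + 1 : ℕ) : ℝ) ≤ ((Cs ∩ G).card : ℝ) := Nat.cast_le.mpr hcount
          push_cast at this
          linarith
        linarith
    · -- 2 ∉ S, use E (at t+2)
      set G := Finset.Ioc (4*t+2) (5*t+2) with hG
      have hGsub : G ⊆ Finset.Ioc 2 (5*t+2) := by
        intro x hx; simp only [hG, Finset.mem_Ioc] at hx ⊢; omega
      have hGbound : ∀ j ∈ G, ((t:ℝ) + 1) ≤ dmin (fun p q => |fgap t p - fgap t q|) j S := by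
        intro j hj
        simp only [hG, Finset.mem_Ioc] at hj
        apply dmin_ge hSne
        intro i hi
        have hi3 : i < 3 := by simpa using hSF hi
        have hne2 : i ≠ 2 := fun h => h2 (h ▸ hi)
        have : i = 0 ∨ i = 1 := by omega
        rw [fgapE t j hj.1 ht1]
        rcases this with rfl | rfl
        · rw [fgap0]; rw [abs_of_nonneg (by linarith)]; linarith
        · rw [fgap1]; rw [abs_of_nonneg (by linarith)]; linarith
      have hcount : 1 ≤ (Cs ∩ G).card := by
        apply count_inter _ _ _ hCsC hGsub
        rw [hCcard, hG, Nat.card_Ioc]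
        omega
      have hsum := sum_dmin_lb (fun p q => |fgap t p - fgap t q|) S Cs G ((t:ℝ)+1) hSne hd hGbound
      have hcast : (1 : ℝ) ≤ ((Cs ∩ G).card : ℝ) := by exact_mod_cast hcount
      nlinarith
  · -- fractional solution
    refine ⟨xgap t, ygap t, ?_, ?_, ?_, ?_, ?_, ?_, ?_⟩
    · intro i _ j _
      simp only [xgap]
      split_ifs <;> linarith
    · intro i _
      simp only [ygap]
      split_ifs <;> linarith
    · intro i hi j hj
      simp only [Finset.mem_range] at hi
      simp only [xgap, ygap]
      interval_cases i <;> norm_num <;> split_ifs <;> linarith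
    · intro j hj
      simp only [Finset.mem_Ioc] at hj
      rw [Finset.sum_range_succ, Finset.sum_range_succ, Finset.sum_range_one]
      simp only [xgap]
      norm_num
      split_ifs <;> first | linarith | omega
    · rw [Finset.sum_range_succ, Finset.sum_range_succ, Finset.sum_range_one]
      simp only [ygap]
      norm_num
      linarith
    · -- total fractional mass
      have hsplit : ∀ g : ℕ → ℝ, ∑ j ∈ Finset.Ioc 2 (5*t+2), g j =
          ∑ j ∈ Finset.Ioc 2 (2*t+2), g j + ∑ j ∈ Finset.Ioc (2*t+2) (4*t+2), g j
            + ∑ j ∈ Finset.Ioc (4*t+2) (5*t+2), g j := by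
        intro g
        rw [← Finset.sum_Ioc_consecutive g (show 2 ≤ 4*t+2 by omega) (show 4*t+2 ≤ 5*t+2 by omega),
          ← Finset.sum_Ioc_consecutive g (show 2 ≤ 2*t+2 by omega) (show 2*t+2 ≤ 4*t+2 by omega)]
      rw [Finset.sum_range_succ, Finset.sum_range_succ, Finset.sum_range_one]
      have p0A : ∑ j ∈ Finset.Ioc 2 (2*t+2), xgap t 0 j = ((2*t : ℕ) : ℝ) * 1 := by
        apply sum_Ioc_const _ _ _ _ _ (by omega)
        intro j h1 h2; simp only [xgap]; split_ifs <;> first | rfl | omega | simp_all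
      have p0B : ∑ j ∈ Finset.Ioc (2*t+2) (4*t+2), xgap t 0 j = ((2*t : ℕ) : ℝ) * (1/t) := by
        apply sum_Ioc_const _ _ _ _ _ (by omega)
        intro j h1 h2; simp only [xgap]; split_ifs <;> first | rfl | omega | simp_all
      have p0E : ∑ j ∈ Finset.Ioc (4*t+2) (5*t+2), xgap t 0 j = ((t : ℕ) : ℝ) * 0 := by
        apply sum_Ioc_const _ _ _ _ _ (by omega)
        intro j h1 h2; simp only [xgap]; split_ifs <;> first | rfl | omega | simp_all
      have p1A : ∑ j ∈ Finset.Ioc 2 (2*t+2), xgap t 1 j = ((2*t : ℕ) : ℝ) * 0 := by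
        apply sum_Ioc_const _ _ _ _ _ (by omega)
        intro j h1 h2; simp only [xgap]; split_ifs <;> first | rfl | omega | simp_all
      have p1B : ∑ j ∈ Finset.Ioc (2*t+2) (4*t+2), xgap t 1 j = ((2*t : ℕ) : ℝ) * (1 - 1/t) := by
        apply sum_Ioc_const _ _ _ _ _ (by omega)
        intro j h1 h2; simp only [xgap]; split_ifs <;> first | rfl | omega | simp_all
      have p1E : ∑ j ∈ Finset.Ioc (4*t+2) (5*t+2), xgap t 1 j = ((t : ℕ) : ℝ) * 0 := by
        apply sum_Ioc_const _ _ _ _ _ (by omega)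
        intro j h1 h2; simp only [xgap]; split_ifs <;> first | rfl | omega | simp_all
      have p2A : ∑ j ∈ Finset.Ioc 2 (2*t+2), xgap t 2 j = ((2*t : ℕ) : ℝ) * 0 := by
        apply sum_Ioc_const _ _ _ _ _ (by omega)
        intro j h1 h2; simp only [xgap]; split_ifs <;> first | rfl | omega | simp_all
      have p2B : ∑ j ∈ Finset.Ioc (2*t+2) (4*t+2), xgap t 2 j = ((2*t : ℕ) : ℝ) * 0 := by
        apply sum_Ioc_const _ _ _ _ _ (by omega)
        intro j h1 h2; simp only [xgap]; split_ifs <;> first | rfl | omega | simp_all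
      have p2E : ∑ j ∈ Finset.Ioc (4*t+2) (5*t+2), xgap t 2 j = ((t : ℕ) : ℝ) * (1/t) := by
        apply sum_Ioc_const _ _ _ _ _ (by omega)
        intro j h1 h2; simp only [xgap]; split_ifs <;> first | rfl | omega | simp_all
      rw [hsplit (fun j => xgap t 0 j), hsplit (fun j => xgap t 1 j),
        hsplit (fun j => xgap t 2 j), p0A, p0B, p0E, p1A, p1B, p1E, p2A, p2B, p2E]
      push_cast
      have hm1 : (t:ℝ) * (t:ℝ)⁻¹ = 1 := mul_inv_cancel₀ htne
      have hm2 : (t:ℝ)^2 * (t:ℝ)⁻¹ = t := by rw [sq, mul_assoc, hm1, mul_one]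
      ring_nf
      linarith [hm1, hm2]
    · -- fractional cost
      have hsplit : ∀ g : ℕ → ℝ, ∑ j ∈ Finset.Ioc 2 (5*t+2), g j =
          ∑ j ∈ Finset.Ioc 2 (2*t+2), g j + ∑ j ∈ Finset.Ioc (2*t+2) (4*t+2), g j
            + ∑ j ∈ Finset.Ioc (4*t+2) (5*t+2), g j := by
        intro g
        rw [← Finset.sum_Ioc_consecutive g (show 2 ≤ 4*t+2 by omega) (show 4*t+2 ≤ 5*t+2 by omega),
          ← Finset.sum_Ioc_consecutive g (show 2 ≤ 2*t+2 by omega) (show 2*t+2 ≤ 4*t+2 by omega)]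
      rw [Finset.sum_range_succ, Finset.sum_range_succ, Finset.sum_range_one]
      have q0A : ∑ j ∈ Finset.Ioc 2 (2*t+2), xgap t 0 j * |fgap t 0 - fgap t j|
          = ((2*t : ℕ) : ℝ) * 0 := by
        apply sum_Ioc_const _ _ _ _ _ (by omega)
        intro j h1 h2
        rw [fgap0, fgapA t j h1 h2]
        simp
      have q0B : ∑ j ∈ Finset.Ioc (2*t+2) (4*t+2), xgap t 0 j * |fgap t 0 - fgap t j|
          = ((2*t : ℕ) : ℝ) * (1/t) := by
        apply sum_Ioc_const _ _ _ _ _ (by omega)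
        intro j h1 h2
        rw [fgap0, fgapB t j h1 h2 ht1]
        have hx : xgap t 0 j = 1/t := by
          simp only [xgap]; split_ifs <;> first | rfl | omega | simp_all
        rw [hx]
        norm_num
      have q0E : ∑ j ∈ Finset.Ioc (4*t+2) (5*t+2), xgap t 0 j * |fgap t 0 - fgap t j|
          = ((t : ℕ) : ℝ) * 0 := by
        apply sum_Ioc_const _ _ _ _ _ (by omega)
        intro j h1 h2
        have hx : xgap t 0 j = 0 := by
          simp only [xgap]; split_ifs <;> first | rfl | omega | simp_all
        rw [hx, zero_mul]
      have q1A : ∑ j ∈ Finset.Ioc 2 (2*t+2), xgap t 1 j * |fgap t 1 - fgap t j|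
          = ((2*t : ℕ) : ℝ) * 0 := by
        apply sum_Ioc_const _ _ _ _ _ (by omega)
        intro j h1 h2
        have hx : xgap t 1 j = 0 := by
          simp only [xgap]; split_ifs <;> first | rfl | omega | simp_all
        rw [hx, zero_mul]
      have q1B : ∑ j ∈ Finset.Ioc (2*t+2) (4*t+2), xgap t 1 j * |fgap t 1 - fgap t j|
          = ((2*t : ℕ) : ℝ) * 0 := by
        apply sum_Ioc_const _ _ _ _ _ (by omega)
        intro j h1 h2
        rw [fgap1, fgapB t j h1 h2 ht1]
        simp
      have q1E : ∑ j ∈ Finset.Ioc (4*t+2) (5*t+2), xgap t 1 j * |fgap t 1 - fgap t j|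
          = ((t : ℕ) : ℝ) * 0 := by
        apply sum_Ioc_const _ _ _ _ _ (by omega)
        intro j h1 h2
        have hx : xgap t 1 j = 0 := by
          simp only [xgap]; split_ifs <;> first | rfl | omega | simp_all
        rw [hx, zero_mul]
      have q2A : ∑ j ∈ Finset.Ioc 2 (2*t+2), xgap t 2 j * |fgap t 2 - fgap t j|
          = ((2*t : ℕ) : ℝ) * 0 := by
        apply sum_Ioc_const _ _ _ _ _ (by omega)
        intro j h1 h2
        have hx : xgap t 2 j = 0 := by
          simp only [xgap]; split_ifs <;> first | rfl | omega | simp_all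
        rw [hx, zero_mul]
      have q2B : ∑ j ∈ Finset.Ioc (2*t+2) (4*t+2), xgap t 2 j * |fgap t 2 - fgap t j|
          = ((2*t : ℕ) : ℝ) * 0 := by
        apply sum_Ioc_const _ _ _ _ _ (by omega)
        intro j h1 h2
        have hx : xgap t 2 j = 0 := by
          simp only [xgap]; split_ifs <;> first | rfl | omega | simp_all
        rw [hx, zero_mul]
      have q2E : ∑ j ∈ Finset.Ioc (4*t+2) (5*t+2), xgap t 2 j * |fgap t 2 - fgap t j|
          = ((t : ℕ) : ℝ) * 0 := by
        apply sum_Ioc_const _ _ _ _ _ (by omega)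
        intro j h1 h2
        rw [fgap2, fgapE t j h1 ht1]
        simp
      rw [hsplit (fun j => xgap t 0 j * |fgap t 0 - fgap t j|),
        hsplit (fun j => xgap t 1 j * |fgap t 1 - fgap t j|),
        hsplit (fun j => xgap t 2 j * |fgap t 2 - fgap t j|),
        q0A, q0B, q0E, q1A, q1B, q1E, q2A, q2B, q2E]
      push_cast
      field_simp
      ring
end
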